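/- Let ω be the block partial permutation [[I_{r₁}, 0, 0, 0], [0, 0, I_{r₂}, 0], [0, 0, 0, 0]] in M_{m,n}(ℝ), Q ∈ X_ω, and B ∈ M_{m,n}(ℝ) a matrix whose last r₂ + n₂ columns are zero; write the rows of B's left block as B₁, …, B_m ∈ ℝ^{r₁+n₁}. Since rk(Q_{[r₁, r₁+n₁]}) = rk(Q_{[r₁, n]}) = r₁, every vector v in the row space R(Q_{[m, r₁+n₁]}) extends uniquely to a row vector (v, f(v)) ∈ R(Q_{[r₁, n]}). Define t_r(B) to be the matrix whose i-th row is (pr_R(B_i), f(pr_R(B_i))), where pr_R is orthogonal projection onto R(Q_{[m, r₁+n₁]}). Then Q + s·t_r(B) ∈ X̄_ω for all s ∈ ℝ, so t_r(B) is tangent to X_ω at Q. -/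

import Mathlib

open Filter Matrix Module Submodule Topology

/-- Sum over `Fin m` of a function vanishing from index `p` on equals the sum over `Fin p`. -/
lemma auxSumCastLE {m p : ℕ} (hp : p ≤ m) (h : Fin m → ℝ)
    (h0 : ∀ k : Fin m, p ≤ (k : ℕ) → h k = 0) :
    ∑ k : Fin m, h k = ∑ k : Fin p, h (Fin.castLE hp k) := by
  classical
  have e : ∀ (q : ℕ) (hq : q ≤ m), ∑ k : Fin q, h (Fin.castLE hq k)
      = ∑ k ∈ Finset.range q, (if hk : k < m then h ⟨k, hk⟩ else 0) := by
    intro q hq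
    rw [← Fin.sum_univ_eq_sum_range]
    refine Finset.sum_congr rfl fun i _ => ?_
    rw [dif_pos (lt_of_lt_of_le i.isLt hq)]
    exact congrArg h (Fin.ext (by simp))
  rw [show (∑ k : Fin m, h k) = ∑ k : Fin m, h (Fin.castLE le_rfl k) from
      Finset.sum_congr rfl fun i _ => rfl, e m le_rfl, e p hp]
  refine (Finset.sum_subset (Finset.range_subset_range.2 hp) ?_).symm
  intro k hk hk'
  simp only [Finset.mem_range] at hk hk'
  rw [dif_pos hk]
  exact h0 ⟨k, hk⟩ (by simpa using hk')

/-- If `r` columns of `B` are linearly independent then `r ≤ B.rank`. -/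
lemma rank_ge_of_cols {a b r : ℕ} (B : Matrix (Fin a) (Fin b) ℝ) (φ : Fin r → Fin b)
    (h : LinearIndependent ℝ fun j => Bᵀ (φ j)) : r ≤ B.rank := by
  have h1 : span ℝ (Set.range fun j => Bᵀ (φ j)) ≤ span ℝ (Set.range Bᵀ) :=
    span_mono (by rintro _ ⟨j, rfl⟩; exact ⟨φ j, rfl⟩)
  have h2 := Submodule.finrank_mono h1
  rw [Matrix.rank_eq_finrank_span_cols]
  calc r = Fintype.card (Fin r) := (Fintype.card_fin r).symm
    _ = finrank ℝ (span ℝ (Set.range fun j => Bᵀ (φ j))) := (finrank_span_eq_card h).symm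
    _ ≤ _ := h2

/-- Lower semicontinuity of rank. -/
lemma rank_lsc {a b : ℕ} (A : Matrix (Fin a) (Fin b) ℝ) :
    ∀ᶠ B in 𝓝 A, A.rank ≤ B.rank := by
  classical
  obtain ⟨t, hts, htspan, htind⟩ := exists_linearIndependent ℝ (Set.range Aᵀ)
  have htfin : t.Finite := htind.setFinite
  haveI := htfin.fintype
  have hcard : Fintype.card t = A.rank := by
    rw [Matrix.rank_eq_finrank_span_cols, show Set.range A.col = Set.range Aᵀ from rfl, ← htspan, finrank_span_set_eq_card htind,
      Set.toFinset_card]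
  let e : Fin A.rank ≃ t := (Fintype.equivFinOfCardEq hcard).symm
  have hφ : ∀ x : t, ∃ j, Aᵀ j = x := fun x => hts x.2
  choose φ0 hφ0 using hφ
  set φ : Fin A.rank → Fin b := fun j => φ0 (e j) with hφdef
  have hind : LinearIndependent ℝ fun j => Aᵀ (φ j) := by
    have heq : (fun j => Aᵀ (φ j)) = (fun x : t => (x : Fin a → ℝ)) ∘ e := by
      funext j
      simp only [hφdef, Function.comp_apply, hφ0]
    rw [heq]
    exact htind.comp e e.injective
  have hopen : IsOpen {B : Matrix (Fin a) (Fin b) ℝ | LinearIndependent ℝ fun j => Bᵀ (φ j)} := by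
    have hc : Continuous fun B : Matrix (Fin a) (Fin b) ℝ => fun j => Bᵀ (φ j) :=
      continuous_pi fun j => continuous_pi fun i =>
        (continuous_apply (φ j)).comp (continuous_apply i)
    exact isOpen_setOf_linearIndependent.preimage hc
  filter_upwards [hopen.mem_nhds hind] with B hB
  exact rank_ge_of_cols B φ hB

/-- Evaluation of a finite sum in Euclidean space. -/
lemma euclid_sum_apply {ι κ : Type*} [Fintype ι] [Fintype κ] (g : ι → EuclideanSpace ℝ κ)
    (j : κ) : (∑ i, g i) j = ∑ i, g i j :=
  map_sum (EuclideanSpace.projₗ (𝕜 := ℝ) j) g Finset.univ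
/-- Upper-left `p × q` submatrix. -/
def ulSub {m n : ℕ} (A : Matrix (Fin m) (Fin n) ℝ) (p q : ℕ) (hp : p ≤ m) (hq : q ≤ n) :
    Matrix (Fin p) (Fin q) ℝ :=
  A.submatrix (Fin.castLE hp) (Fin.castLE hq)

/-- The block partial permutation `[[I_{r₁},0,0,0],[0,0,I_{r₂},0],[0,0,0,0]]`. -/
def omegaBlk (r₁ r₂ m₁ n₁ n₂ : ℕ) :
    Matrix (Fin (r₁ + r₂ + m₁)) (Fin (r₁ + n₁ + r₂ + n₂)) ℝ :=
  Matrix.of fun i j =>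
    if (i.val < r₁ ∧ j.val = i.val) ∨
        (r₁ ≤ i.val ∧ i.val < r₁ + r₂ ∧ j.val = i.val + n₁) then 1 else 0

/-- Membership in the regular part `X_ω`. -/
def memX {m n : ℕ} (ω A : Matrix (Fin m) (Fin n) ℝ) : Prop :=
  ∀ (p q : ℕ) (_ : 1 ≤ p) (_ : 1 ≤ q) (hp : p ≤ m) (hq : q ≤ n),
    (ulSub A p q hp hq).rank = (ulSub ω p q hp hq).rank

/-- Membership in the matrix Schubert variety `X̄_ω`. -/
def memXbar {m n : ℕ} (ω A : Matrix (Fin m) (Fin n) ℝ) : Prop :=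
  ∀ (p q : ℕ) (_ : 1 ≤ p) (_ : 1 ≤ q) (hp : p ≤ m) (hq : q ≤ n),
    (ulSub A p q hp hq).rank ≤ (ulSub ω p q hp hq).rank

/-- The row of index `i` of the left `(r₁+n₁)`-block of an `m × n` matrix. -/
def leftRow (r₁ r₂ m₁ n₁ n₂ : ℕ)
    (A : Matrix (Fin (r₁ + r₂ + m₁)) (Fin (r₁ + n₁ + r₂ + n₂)) ℝ)
    (i : Fin (r₁ + r₂ + m₁)) : EuclideanSpace ℝ (Fin (r₁ + n₁)) :=
  WithLp.toLp 2 fun j => A i ⟨j.val, by have := j.isLt; omega⟩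

/-- The row space `R(Q_{[m, r₁+n₁]})` of the left block of `Q`. -/
noncomputable def rowSpaceLeft (r₁ r₂ m₁ n₁ n₂ : ℕ)
    (Q : Matrix (Fin (r₁ + r₂ + m₁)) (Fin (r₁ + n₁ + r₂ + n₂)) ℝ) :
    Submodule ℝ (EuclideanSpace ℝ (Fin (r₁ + n₁))) :=
  Submodule.span ℝ (Set.range (leftRow r₁ r₂ m₁ n₁ n₂ Q))

/-- The row space `R(Q_{[r₁, n]})` of the top `r₁` rows of `Q`. -/
noncomputable def rowSpaceTop (r₁ r₂ m₁ n₁ n₂ : ℕ)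
    (Q : Matrix (Fin (r₁ + r₂ + m₁)) (Fin (r₁ + n₁ + r₂ + n₂)) ℝ) :
    Submodule ℝ (EuclideanSpace ℝ (Fin (r₁ + n₁ + r₂ + n₂))) :=
  Submodule.span ℝ (Set.range fun i : Fin r₁ =>
    (show EuclideanSpace ℝ (Fin (r₁ + n₁ + r₂ + n₂)) from
      WithLp.toLp 2 fun j => Q ⟨i.val, by have := i.isLt; omega⟩ j))

/-- Concatenation `(v, w)` of a vector of length `r₁+n₁` and one of length `r₂+n₂`. -/
def concatVec (r₁ n₁ r₂ n₂ : ℕ) (v : Fin (r₁ + n₁) → ℝ) (w : Fin (r₂ + n₂) → ℝ) :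
    Fin (r₁ + n₁ + r₂ + n₂) → ℝ :=
  fun j =>
    if h : j.val < r₁ + n₁ then v ⟨j.val, h⟩
    else w ⟨j.val - (r₁ + n₁), by have := j.isLt; omega⟩

/-- The vector `t_r(B)`, whose `i`-th row is `(pr_R(B_i), f(pr_R(B_i)))`. -/
noncomputable def tr (r₁ r₂ m₁ n₁ n₂ : ℕ)
    (Q B : Matrix (Fin (r₁ + r₂ + m₁)) (Fin (r₁ + n₁ + r₂ + n₂)) ℝ)
    (f : EuclideanSpace ℝ (Fin (r₁ + n₁)) →ₗ[ℝ] (Fin (r₂ + n₂) → ℝ)) :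
    Matrix (Fin (r₁ + r₂ + m₁)) (Fin (r₁ + n₁ + r₂ + n₂)) ℝ :=
  Matrix.of fun i j =>
    concatVec r₁ n₁ r₂ n₂
      (fun j' => (Submodule.orthogonalProjectionOnto (rowSpaceLeft r₁ r₂ m₁ n₁ n₂ Q)
        (leftRow r₁ r₂ m₁ n₁ n₂ B i) : EuclideanSpace ℝ (Fin (r₁ + n₁))) j')
      (f (Submodule.orthogonalProjectionOnto (rowSpaceLeft r₁ r₂ m₁ n₁ n₂ Q)
        (leftRow r₁ r₂ m₁ n₁ n₂ B i))) j

/-- Lemma 5.10: with `f` the linear map sending each `v` in the row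
space of the left block of `Q` to the unique `f(v)` with `(v, f(v))` in the row space
of the top `r₁` rows of `Q`, and `B` a matrix whose last `r₂+n₂` columns vanish,
`Q + s · t_r(B)` lies in `X̄_ω` for all `s`; in particular `t_r(B)` is tangent to
`X_ω` at `Q`. -/
theorem tr_tangent (r₁ r₂ m₁ n₁ n₂ : ℕ)
    (Q : Matrix (Fin (r₁ + r₂ + m₁)) (Fin (r₁ + n₁ + r₂ + n₂)) ℝ)
    (hQ : memX (omegaBlk r₁ r₂ m₁ n₁ n₂) Q)
    (f : EuclideanSpace ℝ (Fin (r₁ + n₁)) →ₗ[ℝ] (Fin (r₂ + n₂) → ℝ))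
    (hf : ∀ v ∈ rowSpaceLeft r₁ r₂ m₁ n₁ n₂ Q,
      (show EuclideanSpace ℝ (Fin (r₁ + n₁ + r₂ + n₂)) from
        WithLp.toLp 2 (concatVec r₁ n₁ r₂ n₂ (fun j => v j) (f v))) ∈ rowSpaceTop r₁ r₂ m₁ n₁ n₂ Q)
    (B : Matrix (Fin (r₁ + r₂ + m₁)) (Fin (r₁ + n₁ + r₂ + n₂)) ℝ)
    (hB : ∀ i j, r₁ + n₁ ≤ j.val → B i j = 0) :
    (∀ s : ℝ, memXbar (omegaBlk r₁ r₂ m₁ n₁ n₂) (Q + s • tr r₁ r₂ m₁ n₁ n₂ Q B f)) ∧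
    tr r₁ r₂ m₁ n₁ n₂ Q B f ∈
      tangentConeAt ℝ {A | memX (omegaBlk r₁ r₂ m₁ n₁ n₂) A} Q := by

  classical
  set T := tr r₁ r₂ m₁ n₁ n₂ Q B f with hTdef
  set ω := omegaBlk r₁ r₂ m₁ n₁ n₂ with hω
  -- Step A: each row of T is a combination of the first r₁ rows of Q
  have hrow : ∀ i : Fin (r₁ + r₂ + m₁), ∃ c : Fin r₁ → ℝ, ∀ j : Fin (r₁ + n₁ + r₂ + n₂),
      T i j = ∑ k : Fin r₁, c k * Q ⟨k.1, by omega⟩ j := by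
    intro i
    have hv := (Submodule.orthogonalProjectionOnto (rowSpaceLeft r₁ r₂ m₁ n₁ n₂ Q)
      (leftRow r₁ r₂ m₁ n₁ n₂ B i)).2
    have h1 := hf _ hv
    rw [rowSpaceTop, Submodule.mem_span_range_iff_exists_fun] at h1
    obtain ⟨c, hc⟩ := h1
    refine ⟨c, fun j => ?_⟩
    have h3 := congrArg (fun x : EuclideanSpace ℝ (Fin (r₁ + n₁ + r₂ + n₂)) => x j) hc
    dsimp only at h3
    have h4 := euclid_sum_apply (fun k : Fin r₁ => c k •
      (show EuclideanSpace ℝ (Fin (r₁ + n₁ + r₂ + n₂)) from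
        WithLp.toLp 2 fun j' => Q ⟨k.1, by omega⟩ j')) j
    exact (h3.symm.trans h4).trans (Finset.sum_congr rfl fun k _ => rfl)
  choose c hc using hrow
  set C : Matrix (Fin (r₁ + r₂ + m₁)) (Fin (r₁ + r₂ + m₁)) ℝ :=
    Matrix.of fun i k => if hk : (k : ℕ) < r₁ then c i ⟨k, hk⟩ else 0 with hCdef
  have hC0 : ∀ (i k : Fin (r₁ + r₂ + m₁)), r₁ ≤ (k : ℕ) → C i k = 0 := by
    intro i k hk
    simp only [hCdef, Matrix.of_apply]
    rw [dif_neg (by omega)]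
  have hr₁M : r₁ ≤ (r₁ + r₂ + m₁) := by omega
  have hTC : ∀ (i : Fin (r₁ + r₂ + m₁)) (j : Fin (r₁ + n₁ + r₂ + n₂)), T i j = ∑ k : Fin (r₁ + r₂ + m₁), C i k * Q k j := by
    intro i j
    rw [hc i j,
      auxSumCastLE hr₁M (fun k => C i k * Q k j) (fun k hk => by show C i k * Q k j = 0; rw [hC0 i k hk]; ring)]
    refine Finset.sum_congr rfl fun k _ => ?_
    have : C i (Fin.castLE hr₁M k) = c i k := by
      simp only [hCdef, Matrix.of_apply]
      rw [dif_pos (by simp)]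
      exact congrArg (c i) (Fin.ext (by simp))
    rw [this]
    exact congrArg (fun x => c i k * Q x j) (Fin.ext (by simp))
  -- Step C: key factorization for p ≥ r₁
  have key : ∀ (s : ℝ) (p q : ℕ) (hp : p ≤ (r₁ + r₂ + m₁)) (hq : q ≤ (r₁ + n₁ + r₂ + n₂)), r₁ ≤ p →
      ulSub (Q + s • T) p q hp hq
        = (1 + s • C.submatrix (Fin.castLE hp) (Fin.castLE hp)) * ulSub Q p q hp hq := by
    intro s p q hp hq hrp
    ext i j
    simp only [ulSub, Matrix.submatrix_apply, Matrix.add_apply, Matrix.smul_apply,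
      Matrix.mul_apply, Matrix.one_apply, smul_eq_mul]
    rw [hTC, auxSumCastLE hp (fun k => C (Fin.castLE hp i) k * Q k (Fin.castLE hq j))
      (fun k hk => by show C (Fin.castLE hp i) k * Q k (Fin.castLE hq j) = 0; rw [hC0 _ _ (le_trans hrp hk)]; ring)]
    have expand : ∀ k : Fin p,
        ((if i = k then (1:ℝ) else 0) + s * C (Fin.castLE hp i) (Fin.castLE hp k))
            * Q (Fin.castLE hp k) (Fin.castLE hq j)
        = (if i = k then Q (Fin.castLE hp k) (Fin.castLE hq j) else 0)
            + s * (C (Fin.castLE hp i) (Fin.castLE hp k) * Q (Fin.castLE hp k) (Fin.castLE hq j)) := by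
      intro k; split <;> ring
    rw [Finset.sum_congr rfl fun k _ => expand k, Finset.sum_add_distrib,
      Finset.sum_ite_eq, ← Finset.mul_sum]
    simp
  -- Step D: rank of upper-left submatrices of ω is at least min p q when p ≤ r₁
  have omega_rank : ∀ (p q : ℕ) (hp : p ≤ (r₁ + r₂ + m₁)) (hq : q ≤ (r₁ + n₁ + r₂ + n₂)), p ≤ r₁ →
      min p q ≤ (ulSub ω p q hp hq).rank := by
    intro p q hp hq hpr
    refine rank_ge_of_cols _ (fun j : Fin (min p q) => Fin.castLE (min_le_right p q) j) ?_
    have heq : (fun j : Fin (min p q) =>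
          (ulSub ω p q hp hq)ᵀ (Fin.castLE (min_le_right p q) j))
        = fun j => Pi.single (Fin.castLE (min_le_left p q) j) (1:ℝ) := by
      funext j i
      simp only [Matrix.transpose_apply, ulSub, Matrix.submatrix_apply, hω, omegaBlk,
        Matrix.of_apply, Pi.single_apply, Fin.coe_castLE]
      have hi : (i : ℕ) < r₁ := lt_of_lt_of_le i.isLt hpr
      rcases eq_or_ne (i : ℕ) (j : ℕ) with hij | hij
      · rw [if_pos (Or.inl ⟨hi, hij.symm⟩), if_pos (Fin.ext (by simpa using hij))]
      · rw [if_neg, if_neg]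
        · exact fun hcon => hij (by simpa [Fin.ext_iff] using hcon)
        · rintro (⟨-, h⟩ | ⟨hr, -, -⟩)
          · exact hij h.symm
          · omega
    rw [heq]
    have h2 : LinearIndependent ℝ fun i : Fin p => Pi.single i (1:ℝ) := by
      have := (Pi.basisFun ℝ (Fin p)).linearIndependent
      rwa [show ⇑(Pi.basisFun ℝ (Fin p)) = fun i : Fin p => Pi.single i (1:ℝ) from
        funext fun i => Pi.basisFun_apply ℝ (Fin p) i] at this
    exact h2.comp _ (Fin.castLE_injective _)
  -- Part 1
  have part1 : ∀ s : ℝ, memXbar ω (Q + s • T) := by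
    intro s p q h1p h1q hp hq
    rcases le_or_gt r₁ p with hrp | hrp
    · rw [key s p q hp hq hrp]
      calc ((1 + s • C.submatrix (Fin.castLE hp) (Fin.castLE hp))
              * ulSub Q p q hp hq).rank
          ≤ (ulSub Q p q hp hq).rank := Matrix.rank_mul_le_right _ _
        _ = _ := hQ p q h1p h1q hp hq
    · exact le_trans (le_min (Matrix.rank_le_height _) (Matrix.rank_le_width _))
        (omega_rank p q hp hq hrp.le)
  refine ⟨part1, ?_⟩
  -- Step F: eventual rank lower bound near s = 0
  have hev : ∀ᶠ s : ℝ in 𝓝 0, ∀ (p q : ℕ) (hp : p ≤ (r₁ + r₂ + m₁)) (hq : q ≤ (r₁ + n₁ + r₂ + n₂)),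
      (ulSub Q p q hp hq).rank ≤ (ulSub (Q + s • T) p q hp hq).rank := by
    have hall : ∀ pq : ℕ × ℕ, pq ∈ Finset.range ((r₁ + r₂ + m₁) + 1) ×ˢ Finset.range ((r₁ + n₁ + r₂ + n₂) + 1) →
        ∀ᶠ s : ℝ in 𝓝 0, ∀ (hp : pq.1 ≤ (r₁ + r₂ + m₁)) (hq : pq.2 ≤ (r₁ + n₁ + r₂ + n₂)),
          (ulSub Q pq.1 pq.2 hp hq).rank ≤ (ulSub (Q + s • T) pq.1 pq.2 hp hq).rank := by
      rintro ⟨p, q⟩ -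
      by_cases hp : p ≤ (r₁ + r₂ + m₁)
      · by_cases hq : q ≤ (r₁ + n₁ + r₂ + n₂)
        · have hfun : ∀ s : ℝ, ulSub (Q + s • T) p q hp hq
              = ulSub Q p q hp hq + s • ulSub T p q hp hq := by
            intro s; ext i j
            simp [ulSub]
          have hcont : Continuous fun s : ℝ => ulSub (Q + s • T) p q hp hq := by
            simp only [hfun]
            exact continuous_const.add (continuous_id.smul continuous_const)
          have h0 : ulSub (Q + (0:ℝ) • T) p q hp hq = ulSub Q p q hp hq := by
            ext i j; simp [ulSub]
          have ht : Filter.Tendsto (fun s : ℝ => ulSub (Q + s • T) p q hp hq) (𝓝 0)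
              (𝓝 (ulSub Q p q hp hq)) := by
            have := hcont.tendsto 0
            rwa [h0] at this
          filter_upwards [ht.eventually (rank_lsc (ulSub Q p q hp hq))] with s hs hp' hq'
          exact hs
        · exact Filter.Eventually.of_forall fun s hp' hq' => absurd hq' hq
      · exact Filter.Eventually.of_forall fun s hp' => absurd hp' hp
    have hfin := (Filter.eventually_all_finset
      (Finset.range ((r₁ + r₂ + m₁) + 1) ×ˢ Finset.range ((r₁ + n₁ + r₂ + n₂) + 1))).2 hall
    filter_upwards [hfin] with s hs p q hp hq
    exact hs (p, q) (Finset.mem_product.2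
      ⟨Finset.mem_range.2 (by omega), Finset.mem_range.2 (by omega)⟩) hp hq
  have hevX : ∀ᶠ s : ℝ in 𝓝 0, memX ω (Q + s • T) := by
    filter_upwards [hev] with s hs p q h1p h1q hp hq
    exact le_antisymm (part1 s p q h1p h1q hp hq)
      (le_trans (le_of_eq (hQ p q h1p h1q hp hq).symm) (hs p q hp hq))
  have hseq : Filter.Tendsto (fun n : ℕ => 1 / ((n : ℝ) + 1)) atTop (𝓝 0) :=
    tendsto_one_div_add_atTop_nhds_zero_nat
  refine mem_tangentConeAt_of_seq (atTop : Filter ℕ)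
    (fun n : ℕ => (n : ℝ) + 1) (fun n : ℕ => (1 / ((n : ℝ) + 1)) • T) ?_ ?_ ?_
  swap
  · filter_upwards [hseq.eventually hevX] with n hn
    exact hn
  · simpa using hseq.smul_const T
  · have hcd : (fun n : ℕ => ((n : ℝ) + 1) • ((1 / ((n : ℝ) + 1)) • T)) = fun _ : ℕ => T := by
      funext n
      rw [smul_smul, mul_one_div, div_self (by positivity), one_smul]
    rw [hcd]
    exact tendsto_const_nhds
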